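/- If p ∈ ℝ^d is a maximizer (i.e. all entries of p are positive, p_1 = 1, and min_{w ∈ W_d} G(p,w) ≥ min_{w ∈ W_d} G(q,w) for every q in the positive orthant), then there exists exactly one k ∈ {2,...,d} such that D_k(p) = D_1(p). -/

import Mathlib

def wvec (d : ℕ) (j : Fin d) : Fin d → ℕ :=
  fun i => if i < j then 0 else if i = j then (j : ℕ) + 1 else (i : ℕ)

noncomputable def G (d : ℕ) (p : Fin d → ℝ) (w : Fin d → ℕ) : ℝ :=
  (∏ i, p i) / (Real.sqrt (∑ i, ((w i : ℝ)) ^ 2 * p i ^ 2)) ^ d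

noncomputable def minG (d : ℕ) (p : Fin d → ℝ) : ℝ :=
  ⨅ j : Fin d, G d p (wvec d j)

noncomputable def D (d : ℕ) (j : Fin d) (p : Fin d → ℝ) : ℝ :=
  Real.sqrt (∑ i, ((wvec d j i : ℝ)) ^ 2 * p i ^ 2)

/-- `p*`: `p*_1 = 1`, `p*_2 = 1/√3`, `p*_j = √(2/3)/(j−1)` for `3 ≤ j ≤ d`
(0-based: index `i` has 1-based position `i+1`, so the denominator `j−1` is `i`). -/
noncomputable def pstar (d : ℕ) : Fin d → ℝ :=
  fun i => if (i : ℕ) = 0 then 1 else if (i : ℕ) = 1 then 1 / Real.sqrt 3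
    else Real.sqrt (2 / 3) / ((i : ℕ) : ℝ)

namespace Aux9

lemma wvec_lt {d : ℕ} {j i : Fin d} (h : i < j) : wvec d j i = 0 := by
  simp [wvec, h]

lemma wvec_self {d : ℕ} (j : Fin d) : wvec d j j = (j : ℕ) + 1 := by
  simp [wvec]

lemma wvec_gt {d : ℕ} {j i : Fin d} (h : j < i) : wvec d j i = (i : ℕ) := by
  have h1 : ¬ i < j := not_lt_of_gt h
  have h2 : i ≠ j := ne_of_gt h
  simp [wvec, h1, h2]

noncomputable def E (d : ℕ) (p : Fin d → ℝ) (j : Fin d) : ℝ :=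
  ∑ i, ((wvec d j i : ℝ)) ^ 2 * p i ^ 2

lemma G_eq (d : ℕ) (p : Fin d → ℝ) (j : Fin d) :
    G d p (wvec d j) = (∏ i, p i) / (Real.sqrt (E d p j)) ^ d := rfl

lemma D_eq (d : ℕ) (j : Fin d) (p : Fin d → ℝ) : D d j p = Real.sqrt (E d p j) := rfl

lemma E_pos {d : ℕ} {p : Fin d → ℝ} (hp : ∀ i, 0 < p i) (j : Fin d) : 0 < E d p j := by
  have h1 : ((wvec d j j : ℝ)) ^ 2 * p j ^ 2 ≤ E d p j := by
    apply Finset.single_le_sum (f := fun i => ((wvec d j i : ℝ)) ^ 2 * p i ^ 2)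
      (fun i _ => by positivity) (Finset.mem_univ j)
  have h2 : (0:ℝ) < ((wvec d j j : ℝ)) ^ 2 * p j ^ 2 := by
    rw [wvec_self]
    have := hp j
    positivity
  linarith

lemma G_pos {d : ℕ} {p : Fin d → ℝ} (hp : ∀ i, 0 < p i) (j : Fin d) :
    0 < G d p (wvec d j) := by
  rw [G_eq]
  exact div_pos (Finset.prod_pos (fun i _ => hp i))
    (pow_pos (Real.sqrt_pos.mpr (E_pos hp j)) d)

lemma minG_le (d : ℕ) (p : Fin d → ℝ) (j : Fin d) : minG d p ≤ G d p (wvec d j) :=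
  ciInf_le (Set.Finite.bddBelow (Set.finite_range _)) j

lemma lt_minG (d : ℕ) (hd : 0 < d) (p : Fin d → ℝ) (c : ℝ)
    (h : ∀ j : Fin d, c < G d p (wvec d j)) : c < minG d p := by
  haveI : Nonempty (Fin d) := ⟨⟨0, hd⟩⟩
  obtain ⟨j0, hj0⟩ := Finite.exists_min (fun j : Fin d => G d p (wvec d j))
  exact lt_of_lt_of_le (h j0) (le_ciInf hj0)

lemma sum_move {d : ℕ} (p q : Fin d → ℝ) (a b : Fin d) (hab : a ≠ b) (x y : ℝ)
    (hq : ∀ i, q i = if i = a then x else if i = b then y else p i) (c : Fin d → ℝ) :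
    ∑ i, c i * q i ^ 2 =
      (∑ i, c i * p i ^ 2) + c a * (x ^ 2 - p a ^ 2) + c b * (y ^ 2 - p b ^ 2) := by
  have hqa : q a = x := by rw [hq]; simp
  have hqb : q b = y := by rw [hq]; simp [hab.symm]
  have key : ∑ i, (c i * q i ^ 2 - c i * p i ^ 2)
      = ∑ i ∈ ({a, b} : Finset (Fin d)), (c i * q i ^ 2 - c i * p i ^ 2) := by
    refine (Finset.sum_subset (Finset.subset_univ _) ?_).symm
    intro i _ hi
    simp only [Finset.mem_insert, Finset.mem_singleton, not_or] at hi
    rw [hq i, if_neg hi.1, if_neg hi.2]; ring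
  rw [Finset.sum_pair hab, hqa, hqb] at key
  rw [Finset.sum_sub_distrib] at key
  linarith

lemma prod_move {d : ℕ} (p q : Fin d → ℝ) (a b : Fin d) (hab : a ≠ b) (x y : ℝ)
    (hq : ∀ i, q i = if i = a then x else if i = b then y else p i) :
    (∏ i, q i) * (p a * p b) = (∏ i, p i) * (x * y) := by
  have hqa : q a = x := by rw [hq]; simp
  have hqb : q b = y := by rw [hq]; simp [hab.symm]
  have hsub : ({a, b} : Finset (Fin d)) ⊆ Finset.univ := Finset.subset_univ _
  have h2 := Finset.prod_sdiff (f := q) hsub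
  have h3 := Finset.prod_sdiff (f := p) hsub
  have h1 : ∏ i ∈ (Finset.univ \ {a, b}), q i = ∏ i ∈ (Finset.univ \ {a, b}), p i := by
    refine Finset.prod_congr rfl ?_
    intro i hi
    simp only [Finset.mem_sdiff, Finset.mem_insert, Finset.mem_singleton, not_or] at hi
    rw [hq i, if_neg hi.2.1, if_neg hi.2.2]
  rw [Finset.prod_pair hab, hqa, hqb] at h2
  rw [Finset.prod_pair hab] at h3
  rw [← h2, ← h3, h1]; ring



lemma improve {d : ℕ} (hd : 2 ≤ d) (p : Fin d → ℝ) (hp : ∀ i, 0 < p i)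
    (hmax : ∀ q : Fin d → ℝ, (∀ i, 0 < q i) → minG d q ≤ minG d p)
    (q : Fin d → ℝ) (hq : ∀ i, 0 < q i)
    (hprod : (∏ i, p i) < ∏ i, q i)
    (hE : ∀ j, E d q j ≤ E d p ⟨0, by linarith⟩) : False := by
  set i0 : Fin d := ⟨0, by omega⟩ with hi0
  have hE0 : 0 < E d p i0 := E_pos hp i0
  have hkey : ∀ j, G d p (wvec d i0) < G d q (wvec d j) := by
    intro j
    rw [G_eq, G_eq]
    have hqj : 0 < E d q j := E_pos hq j
    have h1 : 0 < Real.sqrt (E d q j) ^ d := pow_pos (Real.sqrt_pos.mpr hqj) d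
    have h3 : 0 < Real.sqrt (E d p i0) ^ d := pow_pos (Real.sqrt_pos.mpr hE0) d
    have h2 : Real.sqrt (E d q j) ^ d ≤ Real.sqrt (E d p i0) ^ d :=
      pow_le_pow_left₀ (Real.sqrt_nonneg _) (Real.sqrt_le_sqrt (hE j)) d
    calc (∏ i, p i) / Real.sqrt (E d p i0) ^ d
        < (∏ i, q i) / Real.sqrt (E d p i0) ^ d := by
          exact (div_lt_div_iff_of_pos_right h3).mpr hprod
      _ ≤ (∏ i, q i) / Real.sqrt (E d q j) ^ d := by
          exact div_le_div_of_nonneg_left (le_of_lt (Finset.prod_pos (fun i _ => hq i))) h1 h2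
  have hlt : minG d p < minG d q :=
    lt_minG d (by omega) q _ (fun j => lt_of_le_of_lt (minG_le d p i0) (hkey j))
  exact absurd (hmax q hq) (not_le.mpr hlt)


lemma vne {d : ℕ} {j j' : Fin d} (h : (j:ℕ) ≠ (j':ℕ)) : j ≠ j' := fun he => h (by rw [he])

lemma flt {d : ℕ} {j j' : Fin d} (h : (j:ℕ) < (j':ℕ)) : j < j' := by
  rwa [Fin.lt_def]

lemma stepA {d : ℕ} (hd : 2 ≤ d) (p : Fin d → ℝ) (hp : ∀ i, 0 < p i)
    (h1 : p ⟨0, by linarith⟩ = 1)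
    (hmax : ∀ q : Fin d → ℝ, (∀ i, 0 < q i) → minG d q ≤ minG d p) :
    ∀ j, E d p j ≤ E d p ⟨0, by linarith⟩ := by
  set i0 : Fin d := ⟨0, by omega⟩ with hi0
  set i1 : Fin d := ⟨1, by omega⟩ with hi1
  have h01 : i0 ≠ i1 := vne (by simp [hi0, hi1])
  by_contra hcon
  push_neg at hcon
  obtain ⟨j1, hj1⟩ := hcon
  have hj1ne : j1 ≠ i0 := by
    intro h; rw [h] at hj1; exact lt_irrefl _ hj1
  set x := Real.sqrt (1 + (E d p j1 - E d p i0)) with hxdef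
  have hxsq : x ^ 2 = 1 + (E d p j1 - E d p i0) := Real.sq_sqrt (by linarith)
  have hxnn : 0 ≤ x := Real.sqrt_nonneg _
  have hx1 : 1 < x := by nlinarith
  set q : Fin d → ℝ := fun i => if i = i0 then x else if i = i1 then p i1 else p i with hqdef
  have hqdef' : ∀ i, q i = if i = i0 then x else if i = i1 then p i1 else p i := fun i => rfl
  have hqpos : ∀ i, 0 < q i := by
    intro i
    rw [hqdef']
    split_ifs with h h'
    · linarith
    · exact hp i1
    · exact hp i
  -- E of q
  have hEq : ∀ j, E d q j = E d p j
      + ((wvec d j i0 : ℝ)) ^ 2 * (x ^ 2 - p i0 ^ 2) := by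
    intro j
    have := sum_move p q i0 i1 h01 x (p i1) hqdef' (fun i => ((wvec d j i : ℝ)) ^ 2)
    unfold E
    rw [this]; ring
  have hEq0 : E d q i0 = E d p j1 := by
    rw [hEq i0, wvec_self, h1, hxsq]
    push_cast [hi0]
    ring
  have hEqj : ∀ j, j ≠ i0 → E d q j = E d p j := by
    intro j hj
    rw [hEq j, wvec_lt (show i0 < j from flt (by
      simp only [hi0]
      have : (j:ℕ) ≠ 0 := fun h => hj (Fin.ext (by simp [hi0, h]))
      omega))]
    push_cast; ring
  -- product of q
  have hprodq : (∏ i, q i) = x * (∏ i, p i) := by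
    have h2 := prod_move p q i0 i1 h01 x (p i1) hqdef'
    rw [h1] at h2
    have hpi1 : p i1 ≠ 0 := ne_of_gt (hp i1)
    field_simp at h2
    nlinarith [hp i1, h2]
  -- strict improvement for every j
  have hkey : ∀ j, minG d p < G d q (wvec d j) := by
    intro j
    rcases eq_or_ne j i0 with rfl | hj
    · rw [G_eq, hEq0, hprodq]
      have hmle := minG_le d p j1
      rw [G_eq] at hmle
      have hP : 0 < (∏ i, p i) := Finset.prod_pos (fun i _ => hp i)
      have hden : 0 < Real.sqrt (E d p j1) ^ d :=
        pow_pos (Real.sqrt_pos.mpr (E_pos hp j1)) d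
      have : (∏ i, p i) / Real.sqrt (E d p j1) ^ d
          < x * (∏ i, p i) / Real.sqrt (E d p j1) ^ d := by
        apply (div_lt_div_iff_of_pos_right hden).mpr
        nlinarith
      linarith
    · rw [G_eq, hEqj j hj, hprodq]
      have hmle := minG_le d p j
      rw [G_eq] at hmle
      have hP : 0 < (∏ i, p i) := Finset.prod_pos (fun i _ => hp i)
      have hden : 0 < Real.sqrt (E d p j) ^ d :=
        pow_pos (Real.sqrt_pos.mpr (E_pos hp j)) d
      have : (∏ i, p i) / Real.sqrt (E d p j) ^ d
          < x * (∏ i, p i) / Real.sqrt (E d p j) ^ d := by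
        apply (div_lt_div_iff_of_pos_right hden).mpr
        nlinarith
      linarith
  have hlt : minG d p < minG d q := lt_minG d (by omega) q _ hkey
  exact absurd (hmax q hqpos) (not_le.mpr hlt)


lemma Ediff01 {d : ℕ} (hd : 2 ≤ d) (p : Fin d → ℝ) :
    E d p ⟨0, by linarith⟩ - E d p ⟨1, by omega⟩
      = p ⟨0, by linarith⟩ ^ 2 - 3 * p ⟨1, by omega⟩ ^ 2 := by
  set i0 : Fin d := ⟨0, by omega⟩ with hi0
  set i1 : Fin d := ⟨1, by omega⟩ with hi1
  have h01 : i0 ≠ i1 := vne (by simp [hi0, hi1])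
  unfold E
  rw [← Finset.sum_sub_distrib]
  have key : ∑ i, (((wvec d i0 i : ℝ)) ^ 2 * p i ^ 2 - ((wvec d i1 i : ℝ)) ^ 2 * p i ^ 2)
      = ∑ i ∈ ({i0, i1} : Finset (Fin d)),
        (((wvec d i0 i : ℝ)) ^ 2 * p i ^ 2 - ((wvec d i1 i : ℝ)) ^ 2 * p i ^ 2) := by
    refine (Finset.sum_subset (Finset.subset_univ _) ?_).symm
    intro i _ hi
    simp only [Finset.mem_insert, Finset.mem_singleton, not_or] at hi
    have hv0 : (0:ℕ) < (i:ℕ) := by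
      rcases Nat.eq_zero_or_pos (i:ℕ) with h | h
      · exact absurd (Fin.ext (by simp [hi0, h])) hi.1
      · exact h
    have hv1 : (1:ℕ) < (i:ℕ) := by
      rcases Nat.lt_or_ge 1 (i:ℕ) with h | h
      · exact h
      · exact absurd (Fin.ext (by simp [hi1]; omega)) hi.2
    rw [wvec_gt (show i0 < i from flt (by simpa [hi0] using hv0)),
        wvec_gt (show i1 < i from flt (by simpa [hi1] using hv1))]
    ring
  rw [key, Finset.sum_pair h01]
  rw [wvec_self, wvec_lt (show i0 < i1 from flt (by simp [hi0, hi1])),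
      wvec_gt (show i0 < i1 from flt (by simp [hi0, hi1])), wvec_self]
  push_cast [hi0, hi1]
  ring

lemma stepB {d : ℕ} (hd : 2 ≤ d) (p : Fin d → ℝ) (hp : ∀ i, 0 < p i)
    (h1 : p ⟨0, by linarith⟩ = 1)
    (hmax : ∀ q : Fin d → ℝ, (∀ i, 0 < q i) → minG d q ≤ minG d p) :
    E d p ⟨1, by omega⟩ = E d p ⟨0, by linarith⟩ := by
  set i0 : Fin d := ⟨0, by omega⟩ with hi0
  set i1 : Fin d := ⟨1, by omega⟩ with hi1
  have hv0 : (i0 : ℕ) = 0 := rfl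
  have hv1 : (i1 : ℕ) = 1 := rfl
  have h01 : i0 ≠ i1 := vne (by simp [hv0, hv1])
  have h01lt : i0 < i1 := flt (by simp [hv0, hv1])
  have hA : ∀ j, E d p j ≤ E d p i0 := stepA hd p hp h1 hmax
  have h1' : p i0 = 1 := h1
  by_contra hne
  have hne' : E d p i1 ≠ E d p i0 := hne
  have hlt : E d p i1 < E d p i0 := lt_of_le_of_ne (hA i1) hne'
  have hdiff : E d p i0 - E d p i1 = p i0 ^ 2 - 3 * p i1 ^ 2 := Ediff01 hd p
  rw [h1'] at hdiff
  have hp1pos := hp i1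
  have hp1lt : p i1 ^ 2 < 1 / 3 := by nlinarith
  obtain ⟨θ, hθpos, hθ1, hθ2⟩ : ∃ θ : ℝ, 0 < θ ∧ θ ≤ (E d p i0 - E d p i1) / 8 ∧ θ ≤ 1 / 4 :=
    ⟨min ((E d p i0 - E d p i1) / 8) (1 / 4), lt_min (by linarith) (by norm_num),
      min_le_left _ _, min_le_right _ _⟩
  set x := Real.sqrt (1 - θ) with hxdef
  set y := Real.sqrt (p i1 ^ 2 + θ) with hydef
  have hxsq : x ^ 2 = 1 - θ := Real.sq_sqrt (by linarith)
  have hysq : y ^ 2 = p i1 ^ 2 + θ := Real.sq_sqrt (by nlinarith [sq_nonneg (p i1)])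
  have hxpos : 0 < x := Real.sqrt_pos.mpr (by linarith)
  have hypos : 0 < y := Real.sqrt_pos.mpr (by nlinarith [sq_nonneg (p i1)])
  set q : Fin d → ℝ := fun i => if i = i0 then x else if i = i1 then y else p i with hqdef
  have hqdef' : ∀ i, q i = if i = i0 then x else if i = i1 then y else p i := fun i => rfl
  have hqpos : ∀ i, 0 < q i := by
    intro i; rw [hqdef']; split_ifs
    · exact hxpos
    · exact hypos
    · exact hp i
  have hEq : ∀ j, E d q j = E d p j
      + ((wvec d j i0 : ℝ)) ^ 2 * (x ^ 2 - p i0 ^ 2)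
      + ((wvec d j i1 : ℝ)) ^ 2 * (y ^ 2 - p i1 ^ 2) := by
    intro j
    exact sum_move p q i0 i1 h01 x y hqdef' (fun i => ((wvec d j i : ℝ)) ^ 2)
  have hEbound : ∀ j, E d q j ≤ E d p i0 := by
    intro j
    by_cases hj0 : j = i0
    · rw [hj0]
      have e := hEq i0
      rw [wvec_self, wvec_gt h01lt, hxsq, hysq, h1'] at e
      simp only [hv0, hv1] at e
      push_cast at e
      linarith
    · by_cases hj1 : j = i1
      · rw [hj1]
        have e := hEq i1
        rw [wvec_lt h01lt, wvec_self, hxsq, hysq, h1'] at e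
        simp only [hv1] at e
        push_cast at e
        have := hA i1
        linarith
      · have hj0' : (j : ℕ) ≠ 0 := fun h => hj0 (Fin.ext (by rw [h, hv0]))
        have hj1' : (j : ℕ) ≠ 1 := fun h => hj1 (Fin.ext (by rw [h, hv1]))
        have e := hEq j
        rw [wvec_lt (show i0 < j from flt (by rw [hv0]; omega)),
          wvec_lt (show i1 < j from flt (by rw [hv1]; omega))] at e
        push_cast at e
        have := hA j
        linarith
  have hprodq : (∏ i, p i) < ∏ i, q i := by
    have h2 := prod_move p q i0 i1 h01 x y hqdef'
    rw [h1', one_mul] at h2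
    have hxylt : p i1 < x * y := by
      have hsq : p i1 ^ 2 < (x * y) ^ 2 := by
        have hxy2 : (x * y) ^ 2 = (1 - θ) * (p i1 ^ 2 + θ) := by rw [mul_pow, hxsq, hysq]
        nlinarith [mul_pos hθpos (show (0:ℝ) < 1 - p i1 ^ 2 - θ by linarith)]
      exact lt_of_pow_lt_pow_left₀ 2 (le_of_lt (mul_pos hxpos hypos)) hsq
    have hP : 0 < ∏ i, p i := Finset.prod_pos (fun i _ => hp i)
    have step : (∏ i, p i) * p i1 < (∏ i, q i) * p i1 := by
      rw [h2]
      exact (mul_lt_mul_iff_right₀ hP).mpr hxylt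
    exact lt_of_mul_lt_mul_right step (le_of_lt (hp i1))
  exact improve hd p hp hmax q hqpos hprodq hEbound


lemma sumboundC {d : ℕ} (hd : 2 ≤ d) (p : Fin d → ℝ) (l : Fin d) (hl2 : 2 ≤ (l : ℕ)) :
    p ⟨0, by linarith⟩ ^ 2 + p ⟨1, by omega⟩ ^ 2 - (2 * ((l : ℕ) : ℝ) + 1) * p l ^ 2
      ≤ E d p ⟨0, by linarith⟩ - E d p l := by
  set i0 : Fin d := ⟨0, by omega⟩ with hi0
  set i1 : Fin d := ⟨1, by omega⟩ with hi1
  have hv0 : (i0 : ℕ) = 0 := rfl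
  have hv1 : (i1 : ℕ) = 1 := rfl
  have h0l : i0 < l := flt (by omega)
  have h1l : i1 < l := flt (by omega)
  have h01lt : i0 < i1 := flt (by omega)
  have h01 : i0 ≠ i1 := vne (by omega)
  have h0l' : i0 ≠ l := ne_of_lt h0l
  have h1l' : i1 ≠ l := ne_of_lt h1l
  have hEsub : E d p i0 - E d p l
      = ∑ i, (((wvec d i0 i : ℝ)) ^ 2 * p i ^ 2 - ((wvec d l i : ℝ)) ^ 2 * p i ^ 2) := by
    unfold E; rw [Finset.sum_sub_distrib]
  have hnn : ∀ i ∈ Finset.univ, i ∉ ({i0, i1, l} : Finset (Fin d)) →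
      0 ≤ ((wvec d i0 i : ℝ)) ^ 2 * p i ^ 2 - ((wvec d l i : ℝ)) ^ 2 * p i ^ 2 := by
    intro i _ hi
    simp only [Finset.mem_insert, Finset.mem_singleton, not_or] at hi
    have hiv0 : (i : ℕ) ≠ 0 := fun h => hi.1 (Fin.ext (by rw [h, hv0]))
    have h0i : i0 < i := flt (by omega)
    rcases lt_trichotomy i l with h | h | h
    · rw [wvec_gt h0i, wvec_lt h]
      push_cast
      nlinarith [sq_nonneg (((i:ℕ):ℝ) * p i)]
    · exact absurd h hi.2.2
    · rw [wvec_gt h0i, wvec_gt h]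
      simp
  have hge := Finset.sum_le_sum_of_subset_of_nonneg
    (Finset.subset_univ ({i0, i1, l} : Finset (Fin d))) hnn
  have hmem0 : i0 ∉ ({i1, l} : Finset (Fin d)) := by simp [h01, h0l']
  have hmem1 : i1 ∉ ({l} : Finset (Fin d)) := by simp [h1l']
  rw [Finset.sum_insert hmem0, Finset.sum_insert hmem1, Finset.sum_singleton] at hge
  rw [wvec_self, wvec_lt h0l, wvec_gt h01lt, wvec_lt h1l, wvec_gt h0l, wvec_self] at hge
  rw [hEsub]
  simp only [hv0, hv1] at hge
  push_cast at hge ⊢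
  nlinarith [hge]

set_option maxHeartbeats 1000000 in
lemma stepC {d : ℕ} (hd : 2 ≤ d) (p : Fin d → ℝ) (hp : ∀ i, 0 < p i)
    (h1 : p ⟨0, by linarith⟩ = 1)
    (hmax : ∀ q : Fin d → ℝ, (∀ i, 0 < q i) → minG d q ≤ minG d p)
    (l : Fin d) (hl2 : 2 ≤ (l : ℕ)) (hEl : E d p l = E d p ⟨0, by linarith⟩) : False := by
  set i0 : Fin d := ⟨0, by omega⟩ with hi0
  set i1 : Fin d := ⟨1, by omega⟩ with hi1
  have hv0 : (i0 : ℕ) = 0 := rfl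
  have hv1 : (i1 : ℕ) = 1 := rfl
  have h0l : i0 < l := flt (by omega)
  have h0l' : i0 ≠ l := ne_of_lt h0l
  have hA : ∀ j, E d p j ≤ E d p i0 := stepA hd p hp h1 hmax
  have h1' : p i0 = 1 := h1
  have hE1 : E d p i1 = E d p i0 := stepB hd p hp h1 hmax
  have hdiff : E d p i0 - E d p i1 = p i0 ^ 2 - 3 * p i1 ^ 2 := Ediff01 hd p
  rw [h1'] at hdiff
  have hp1sq : p i1 ^ 2 = 1 / 3 := by rw [hE1] at hdiff; linarith
  set lR : ℝ := ((l : ℕ) : ℝ) with hlR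
  have hlR2 : (2 : ℝ) ≤ lR := by rw [hlR]; exact_mod_cast hl2
  have hbound : p i0 ^ 2 + p i1 ^ 2 - (2 * lR + 1) * p l ^ 2
      ≤ E d p i0 - E d p l := sumboundC hd p l hl2
  rw [hEl, h1'] at hbound
  have h43 : 4 / 3 ≤ (2 * lR + 1) * p l ^ 2 := by
    rw [hp1sq] at hbound
    nlinarith [hbound]
  have hplpos := hp l
  have hu : 16 / 15 ≤ lR ^ 2 * p l ^ 2 := by
    nlinarith [sq_nonneg (p l), mul_nonneg (mul_nonneg (show (0:ℝ) ≤ 15 by norm_num)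
      (sq_nonneg lR)) (show (0:ℝ) ≤ (2 * lR + 1) * p l ^ 2 - 4 / 3 by linarith),
      mul_nonneg (show (0:ℝ) ≤ lR - 2 by linarith) (show (0:ℝ) ≤ 5 * lR + 2 by linarith)]
  have h30 : (0 : ℝ) < 30 * lR ^ 2 := by positivity
  have harg : 0 < p l ^ 2 - 1 / (30 * lR ^ 2) := by
    rw [sub_pos, div_lt_iff₀ h30]
    nlinarith [hu]
  set x := Real.sqrt (1 + 1 / 30) with hxdef
  set y := Real.sqrt (p l ^ 2 - 1 / (30 * lR ^ 2)) with hydef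
  have hxsq : x ^ 2 = 1 + 1 / 30 := Real.sq_sqrt (by norm_num)
  have hysq : y ^ 2 = p l ^ 2 - 1 / (30 * lR ^ 2) := Real.sq_sqrt (le_of_lt harg)
  have hxpos : 0 < x := Real.sqrt_pos.mpr (by norm_num)
  have hypos : 0 < y := Real.sqrt_pos.mpr harg
  set q : Fin d → ℝ := fun i => if i = i0 then x else if i = l then y else p i with hqdef
  have hqdef' : ∀ i, q i = if i = i0 then x else if i = l then y else p i := fun i => rfl
  have hqpos : ∀ i, 0 < q i := by
    intro i; rw [hqdef']; split_ifs
    · exact hxpos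
    · exact hypos
    · exact hp i
  have hEq : ∀ j, E d q j = E d p j
      + ((wvec d j i0 : ℝ)) ^ 2 * (x ^ 2 - p i0 ^ 2)
      + ((wvec d j l : ℝ)) ^ 2 * (y ^ 2 - p l ^ 2) := by
    intro j
    exact sum_move p q i0 l h0l' x y hqdef' (fun i => ((wvec d j i : ℝ)) ^ 2)
  have hEbound : ∀ j, E d q j ≤ E d p i0 := by
    intro j
    by_cases hj0 : j = i0
    · rw [hj0]
      have e := hEq i0
      rw [wvec_self, wvec_gt h0l, hxsq, hysq, h1'] at e
      simp only [hv0] at e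
      push_cast at e
      have hlRne : lR ^ 2 ≠ 0 := by positivity
      have hcancel : lR ^ 2 * (1 / (30 * lR ^ 2)) = 1 / 30 := by
        field_simp
      rw [e]
      nlinarith [hcancel]
    · have h0j : i0 < j := flt (by
        have : (j : ℕ) ≠ 0 := fun h => hj0 (Fin.ext (by rw [h, hv0]))
        omega)
      have e := hEq j
      rw [wvec_lt h0j] at e
      push_cast at e
      have hterm : ((wvec d j l : ℝ)) ^ 2 * (y ^ 2 - p l ^ 2) ≤ 0 := by
        apply mul_nonpos_of_nonneg_of_nonpos (sq_nonneg _)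
        rw [hysq]
        have : 0 < 1 / (30 * lR ^ 2) := by positivity
        linarith
      have := hA j
      linarith
  have hprodq : (∏ i, p i) < ∏ i, q i := by
    have h2 := prod_move p q i0 l h0l' x y hqdef'
    rw [h1', one_mul] at h2
    have hxylt : p l < x * y := by
      have hsq : p l ^ 2 < (x * y) ^ 2 := by
        have hxy2 : (x * y) ^ 2 = (1 + 1 / 30) * (p l ^ 2 - 1 / (30 * lR ^ 2)) := by
          rw [mul_pow, hxsq, hysq]
        have hee : (1 / (30 * lR ^ 2)) * (30 * lR ^ 2) = 1 := by
          field_simp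
        nlinarith [hu, hee, h30]
      exact lt_of_pow_lt_pow_left₀ 2 (le_of_lt (mul_pos hxpos hypos)) hsq
    have hP : 0 < ∏ i, p i := Finset.prod_pos (fun i _ => hp i)
    have step : (∏ i, p i) * p l < (∏ i, q i) * p l := by
      rw [h2]
      exact (mul_lt_mul_iff_right₀ hP).mpr hxylt
    exact lt_of_mul_lt_mul_right step (le_of_lt (hp l))
  exact improve hd p hp hmax q hqpos hprodq hEbound


end Aux9

/-- If `p` is a maximizer, then there is exactly one `k ∈ {2,…,d}` (0-based:
`1 ≤ k`) with `D_k(p) = D_1(p)`. -/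
theorem stmt9 (d : ℕ) (hd : 2 ≤ d) (p : Fin d → ℝ)
    (hp : ∀ i, 0 < p i) (h1 : p ⟨0, by omega⟩ = 1)
    (hmax : ∀ q : Fin d → ℝ, (∀ i, 0 < q i) → minG d q ≤ minG d p) :
    ∃! k : Fin d, 1 ≤ (k : ℕ) ∧ D d k p = D d ⟨0, by omega⟩ p := by
  have hd0 : 0 < d := by omega
  set i0 : Fin d := ⟨0, by omega⟩ with hi0
  set i1 : Fin d := ⟨1, by omega⟩ with hi1
  have hv0 : (i0 : ℕ) = 0 := rfl
  have hv1 : (i1 : ℕ) = 1 := rfl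
  have hE1 : Aux9.E d p i1 = Aux9.E d p i0 := Aux9.stepB hd p hp h1 hmax
  refine ⟨i1, ⟨⟨by omega, ?_⟩, ?_⟩⟩
  · show D d i1 p = D d i0 p
    rw [Aux9.D_eq, Aux9.D_eq, hE1]
  · rintro k ⟨hk1, hkD⟩
    have h2 : D d k p = D d i0 p := hkD
    rw [Aux9.D_eq, Aux9.D_eq] at h2
    have hEk : Aux9.E d p k = Aux9.E d p i0 := by
      rw [← Real.sq_sqrt (le_of_lt (Aux9.E_pos hp k)),
        ← Real.sq_sqrt (le_of_lt (Aux9.E_pos hp i0)), h2]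
    by_contra hne
    have hkv : (k : ℕ) ≠ 1 := fun h => hne (Fin.ext (by rw [h, hv1]))
    exact Aux9.stepC hd p hp h1 hmax k (by omega) hEk
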